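/- Let M be a generalized Coxeter matrix with m_{ij} odd for some i ≠ j. Then in the generalized Coxeter group W(M), the generators s_i and s_j are conjugate; consequently s_i^g = s_j^g = 1 where g = gcd(m_{ii}, m_{jj}). In particular, if m_{ii} and m_{jj} are coprime, then s_i = s_j = 1 in W(M). -/

import Mathlib

/-- The alternating word `x y x y ⋯` of length `len` on two elements of a monoid. -/
def altProd {A : Type} [Monoid A] (x y : A) (len : ℕ) : A :=
  ((List.range len).map fun t => if t % 2 = 0 then x else y).prod

/-- Let `M` be a generalized Coxeter matrix (`M i j = 0` encoding `m_{ij} = ∞`) and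
suppose the generators `s i` of the generalized Coxeter group `W(M)` (equivalently,
elements of any group satisfying its defining relations) have `m_{ij}` odd for some
`i ≠ j`. Then `s i` and `s j` are conjugate; consequently `s_i^g = s_j^g = 1` for
`g = gcd(m_{ii}, m_{jj})`, and if `m_{ii}, m_{jj}` are coprime then `s_i = s_j = 1`. -/

lemma altProd_succ {A : Type} [Monoid A] (x y : A) (n : ℕ) :
    altProd x y (n + 1) = altProd x y n * (if n % 2 = 0 then x else y) := by
  simp [altProd, List.range_succ]

lemma altProd_even {A : Type} [Monoid A] (x y : A) (k : ℕ) :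
    altProd x y (2 * k) = (x * y) ^ k := by
  induction k with
  | zero => simp [altProd]
  | succ k ih =>
      have h1 : 2 * (k + 1) = (2 * k + 1) + 1 := by ring
      rw [h1, altProd_succ, altProd_succ, ih]
      have : (2 * k + 1) % 2 = 1 := by omega
      simp [this, pow_succ, mul_assoc]

lemma altProd_odd {A : Type} [Monoid A] (x y : A) (k : ℕ) :
    altProd x y (2 * k + 1) = (x * y) ^ k * x := by
  rw [altProd_succ, altProd_even]
  simp

theorem odd_bond_conjugate (I : Type) [Fintype I] (M : I → I → ℕ)
    (hsymm : ∀ i j, M i j = M j i) (hdiag : ∀ i, 2 ≤ M i i)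
    (hoff : ∀ i j, i ≠ j → M i j = 0 ∨ 2 ≤ M i j)
    (G : Type) [Group G] (s : I → G)
    (hbraid : ∀ i j, i ≠ j → M i j ≠ 0 →
      altProd (s i) (s j) (M i j) = altProd (s j) (s i) (M i j))
    (horder : ∀ i, s i ^ M i i = 1)
    (i j : I) (hij : i ≠ j) (hfin : M i j ≠ 0) (hodd : Odd (M i j)) :
    IsConj (s i) (s j) ∧
    s i ^ Nat.gcd (M i i) (M j j) = 1 ∧ s j ^ Nat.gcd (M i i) (M j j) = 1 ∧
    (Nat.Coprime (M i i) (M j j) → s i = 1 ∧ s j = 1) := by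
  obtain ⟨k, hk⟩ := hodd
  set x := s i with hx
  set y := s j with hy
  have hbr := hbraid i j hij hfin
  rw [hk, altProd_odd, altProd_odd] at hbr
  -- hbr : (x*y)^k * x = (y*x)^k * y
  have hsemi : SemiconjBy y (x * y) (y * x) := by
    unfold SemiconjBy
    group
  have hsw : y * (x * y) ^ k = (y * x) ^ k * y := (hsemi.pow_right k).eq
  set w := (x * y) ^ k with hw
  have hconj : w * x * w⁻¹ = y := by
    have : w * x = y * w := by rw [hbr, ← hsw]
    rw [this]
    group
  have hIsConj : IsConj x y := isConj_iff.2 ⟨w, hconj⟩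
  have key : ∀ n : ℕ, x ^ n = 1 ↔ y ^ n = 1 := by
    intro n
    constructor
    · intro h
      have : y ^ n = w * x ^ n * w⁻¹ := by rw [← hconj, conj_pow]
      rw [this, h]; group
    · intro h
      have hy' : y ^ n = w * x ^ n * w⁻¹ := by rw [← hconj, conj_pow]
      rw [hy'] at h
      have h2 : x ^ n = w⁻¹ * (w * x ^ n * w⁻¹) * w := by group
      rw [h2, h]; group
  have hxi : x ^ M i i = 1 := horder i
  have hyj : y ^ M j j = 1 := horder j
  have hxj : x ^ M j j = 1 := (key _).2 hyj
  have hyi : y ^ M i i = 1 := (key _).1 hxi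
  have hxg : x ^ Nat.gcd (M i i) (M j j) = 1 := pow_gcd_eq_one.2 ⟨hxi, hxj⟩
  have hyg : y ^ Nat.gcd (M i i) (M j j) = 1 := pow_gcd_eq_one.2 ⟨hyi, hyj⟩
  refine ⟨hIsConj, hxg, hyg, fun hcop => ?_⟩
  have h1 : Nat.gcd (M i i) (M j j) = 1 := hcop
  rw [h1, pow_one] at hxg hyg
  exact ⟨hxg, hyg⟩
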